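/- Let G be a countably infinite group, H a compact metrizable topological group with normalized Haar probability measure ν, and τ : G → H an injective group homomorphism with dense image. Let (Γ_n) be a decreasing sequence of finite-index normal subgroups of G such that each K_n := closure(τ(Γ_n)) is an open subgroup of H, τ^{-1}(K_n) = Γ_n, and (K_n) forms a neighborhood basis of 1_H. Let W ⊆ H be compact with W = closure(interior W) and ∂W ∩ τ(G) = ∅. Then for every choice of fundamental domains D_n of G/Γ_n, the densities #(D_n ∩ Per(x_W, Γ_n))/#D_n converge to 1 − ν(∂W) as n → ∞. In particular, the regularity constant 𝒟(x_W) equals 1 − ν(∂W), and x_W is a regular Toeplitz array if and only if ν(∂W) = 0. -/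

import Mathlib

open MeasureTheory Filter Set Topology
open scoped symmDiff ENNReal

/-- Extended logarithm of an `ℝ≥0∞` value, with `eLog 0 = ⊥` and `eLog ⊤ = ⊤`. -/
noncomputable def eLog (x : ℝ≥0∞) : EReal :=
  if x = 0 then ⊥ else if x = ⊤ then ⊤ else ((Real.log x.toReal : ℝ) : EReal)

/-- Maximal cardinality (in `ℝ≥0∞`) of an `ε`-separated subset of `S` w.r.t. `d`. -/
noncomputable def sepCount {Z : Type*} (S : Set Z) (d : Z → Z → ℝ) (ε : ℝ) : ℝ≥0∞ :=
  ⨆ (A : Finset Z) (_ : ↑A ⊆ S ∧ (A : Set Z).Pairwise fun z z' => ε ≤ d z z'), (A.card : ℝ≥0∞)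

/-- The quantity `log Sep(S, d, ε) / (- log ε)`, as an extended real. -/
noncomputable def acRatio {Z : Type*} (S : Set Z) (d : Z → Z → ℝ) (ε : ℝ) : EReal :=
  eLog (sepCount S d ε) * (((-Real.log ε)⁻¹ : ℝ) : EReal)

open Classical in
/-- `F` is a left Følner sequence in the group `G`. -/
def IsFolner {G : Type*} [Group G] (F : ℕ → Finset G) : Prop :=
  (∀ n, (F n).Nonempty) ∧ ∀ g : G,
    Filter.Tendsto
      (fun n => ((((F n).image fun h => g * h) ∆ F n).card : ℝ) / ((F n).card : ℝ))
      Filter.atTop (nhds 0)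

/-- The Besicovitch pseudometric w.r.t. the sequence `F`. -/
noncomputable def besicovitchDist {G : Type*} (F : ℕ → Finset G) (x y : G → Bool) : ℝ :=
  Filter.limsup (fun n => (((F n).filter fun g => x g ≠ y g).card : ℝ) / ((F n).card : ℝ))
    Filter.atTop

open Classical in
/-- The symbolic model set (as a 0-1 array) associated to a window `W ⊆ H`. -/
noncomputable def modelSet {G H : Type*} (τ : G → H) (W : Set H) : G → Bool :=
  fun g => decide (τ g ∈ W)

/-- Orbit closure of `x` under the left shift `(g·x)(h) = x(hg)`, in the product topology. -/
def shiftOrbitClosure {G : Type*} [Group G] (x : G → Bool) : Set (G → Bool) :=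
  closure { y : G → Bool | ∃ g : G, y = fun h => x (h * g) }

/-- `Per(x, Γ, α)`, the set of `Γ`-periodic positions of `x` with value `α`. -/
def perA {G : Type*} [Group G] (x : G → Bool) (Γ : Subgroup G) (α : Bool) : Set G :=
  { g : G | ∀ γ ∈ Γ, x (g * γ) = α }

/-- `Per(x, Γ) = Per(x,Γ,0) ∪ Per(x,Γ,1)`. -/
def perSet {G : Type*} [Group G] (x : G → Bool) (Γ : Subgroup G) : Set G :=
  perA x Γ false ∪ perA x Γ true

/-- `E` is a fundamental domain of `G/Γ`: `g ↦ gΓ` is a bijection from `E` onto `G/Γ`. -/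
def IsFundDom {G : Type*} [Group G] (Γ : Subgroup G) (E : Finset G) : Prop :=
  ∀ g : G, ∃! d, d ∈ E ∧ g⁻¹ * d ∈ Γ

/-- The density `D(x,Γ)` of `Per(x,Γ)` computed in a fundamental domain `E`. -/
noncomputable def perDensity {G : Type*} [Group G] (x : G → Bool) (Γ : Subgroup G)
    (E : Finset G) : ℝ :=
  (((E : Set G) ∩ perSet x Γ).ncard : ℝ) / (E.card : ℝ)

/-- The regularity constant `𝒟(x)`. -/
noncomputable def regConst {G : Type*} [Group G] (x : G → Bool) : ℝ :=
  sSup { r : ℝ | ∃ (Γ : Subgroup G) (E : Finset G),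
    Γ.FiniteIndex ∧ IsFundDom Γ E ∧ r = perDensity x Γ E }

section Helpers
variable {G : Type*} [Group G]

lemma isFundDom_unique {Λ : Subgroup G} {E : Finset G} (hE : IsFundDom Λ E)
    {d₁ d₂ : G} (h₁ : d₁ ∈ E) (h₂ : d₂ ∈ E) (h : d₁⁻¹ * d₂ ∈ Λ) : d₁ = d₂ := by
  obtain ⟨d, -, hu⟩ := hE d₁
  have e1 : d₁ = d := hu d₁ ⟨h₁, by simpa using Λ.one_mem⟩
  have e2 : d₂ = d := hu d₂ ⟨h₂, h⟩
  rw [e1, e2]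

lemma isFundDom_nonempty {Λ : Subgroup G} {E : Finset G} (hE : IsFundDom Λ E) :
    E.Nonempty := by
  obtain ⟨d, ⟨hd, -⟩, -⟩ := hE 1
  exact ⟨d, hd⟩

open Classical in
lemma fiber_const {Λ₀ M : Subgroup G} (hle : Λ₀ ≤ M)
    {E : Finset G} (hE : IsFundDom Λ₀ E) (g : G) :
    (E.filter fun d => g⁻¹ * d ∈ M).card = (E.filter fun d => d ∈ M).card := by
  classical
  refine Finset.card_bij (fun d _ => (hE (g⁻¹ * d)).choose) ?_ ?_ ?_
  · intro a ha
    obtain ⟨haE, haM⟩ := Finset.mem_filter.mp ha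
    obtain ⟨⟨hcE, hcΛ⟩, -⟩ := (hE (g⁻¹ * a)).choose_spec
    refine Finset.mem_filter.mpr ⟨hcE, ?_⟩
    have h2 : (g⁻¹ * a) * ((g⁻¹ * a)⁻¹ * (hE (g⁻¹ * a)).choose) ∈ M :=
      M.mul_mem haM (hle hcΛ)
    simpa [mul_assoc] using h2
  · intro a₁ h₁ a₂ h₂ heq
    obtain ⟨h₁E, -⟩ := Finset.mem_filter.mp h₁
    obtain ⟨h₂E, -⟩ := Finset.mem_filter.mp h₂
    obtain ⟨⟨c1E, c1Λ⟩, -⟩ := (hE (g⁻¹ * a₁)).choose_spec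
    obtain ⟨⟨c2E, c2Λ⟩, -⟩ := (hE (g⁻¹ * a₂)).choose_spec
    have heq' : (hE (g⁻¹ * a₁)).choose = (hE (g⁻¹ * a₂)).choose := heq
    rw [heq'] at c1Λ
    have key : ((g⁻¹ * a₁)⁻¹ * (hE (g⁻¹ * a₂)).choose) *
        ((g⁻¹ * a₂)⁻¹ * (hE (g⁻¹ * a₂)).choose)⁻¹ = a₁⁻¹ * a₂ := by group
    have hmem : a₁⁻¹ * a₂ ∈ Λ₀ := by
      rw [← key]; exact Λ₀.mul_mem c1Λ (Λ₀.inv_mem c2Λ)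
    exact isFundDom_unique hE h₁E h₂E hmem
  · intro b hb
    obtain ⟨hbE, hbM⟩ := Finset.mem_filter.mp hb
    obtain ⟨⟨haE, haΛ⟩, -⟩ := (hE (g * b)).choose_spec
    set a := (hE (g * b)).choose with hadef
    have haM : g⁻¹ * a ∈ M := by
      have key : b * ((g * b)⁻¹ * a) = g⁻¹ * a := by group
      rw [← key]; exact M.mul_mem hbM (hle haΛ)
    refine ⟨a, Finset.mem_filter.mpr ⟨haE, haM⟩, ?_⟩
    have hb2 : (g⁻¹ * a)⁻¹ * b ∈ Λ₀ := by
      have key : (g⁻¹ * a)⁻¹ * b = ((g * b)⁻¹ * a)⁻¹ := by group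
      rw [key]; exact Λ₀.inv_mem haΛ
    exact ((hE (g⁻¹ * a)).choose_spec.2 b ⟨hbE, hb2⟩).symm

lemma exists_fundDom (Λ : Subgroup G) [Λ.FiniteIndex] : ∃ E : Finset G, IsFundDom Λ E := by
  classical
  have hfin : (Set.range (fun q : G ⧸ Λ => Quotient.out q)).Finite := Set.finite_range _
  refine ⟨hfin.toFinset, fun g => ?_⟩
  refine ⟨Quotient.out (QuotientGroup.mk (s := Λ) g), ⟨?_, ?_⟩, ?_⟩
  · simp [Set.Finite.mem_toFinset]
  · exact QuotientGroup.eq.mp ((QuotientGroup.out_eq' (QuotientGroup.mk (s := Λ) g)).symm)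
  · rintro y ⟨hyE, hyΛ⟩
    rw [Set.Finite.mem_toFinset] at hyE
    obtain ⟨q, rfl⟩ := hyE
    have : QuotientGroup.mk (s := Λ) g = QuotientGroup.mk (Quotient.out q) :=
      QuotientGroup.eq.mpr hyΛ
    rw [QuotientGroup.out_eq'] at this
    rw [← this]

lemma perSet_invariant {x : G → Bool} {Λ : Subgroup G} {g g' : G}
    (hg : g ∈ perSet x Λ) (h : g⁻¹ * g' ∈ Λ) : g' ∈ perSet x Λ := by
  rcases hg with hg | hg
  · left; intro γ hγ
    have := hg ((g⁻¹ * g') * γ) (Λ.mul_mem h hγ)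
    rwa [show g * ((g⁻¹ * g') * γ) = g' * γ by group] at this
  · right; intro γ hγ
    have := hg ((g⁻¹ * g') * γ) (Λ.mul_mem h hγ)
    rwa [show g * ((g⁻¹ * g') * γ) = g' * γ by group] at this

end Helpers

open Classical in
lemma count_eq {G H : Type*} [Group G] [Group H] [TopologicalSpace H] [IsTopologicalGroup H]
    [MeasurableSpace H] [BorelSpace H]
    (ν : Measure H) [IsProbabilityMeasure ν] [ν.IsMulLeftInvariant]
    (τ : G →* H) (hdense : DenseRange ⇑τ)
    (L : Subgroup H) (hLo : IsOpen (L : Set H))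
    (Λ₀ : Subgroup G) (hle : ∀ γ ∈ Λ₀, τ γ ∈ L)
    {E : Finset G} (hE : IsFundDom Λ₀ E)
    (S : Set H) (hSm : MeasurableSet S) (hSsat : ∀ h ∈ S, ∀ l ∈ L, h * l ∈ S) :
    ((E.filter fun d => τ d ∈ S).card : ℝ≥0∞) = ν S * E.card := by
  classical
  set mkL : H → H ⧸ L := QuotientGroup.mk with hmkL
  set Q : Finset (H ⧸ L) := E.image (fun d => mkL (τ d)) with hQ
  set coset : H → Set H := fun x => (fun h => x⁻¹ * h) ⁻¹' (L : Set H) with hcoset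
  have hmem : ∀ x h : H, h ∈ coset x ↔ x⁻¹ * h ∈ L := fun _ _ => Iff.rfl
  have hco : ∀ x, IsOpen (coset x) := fun x => hLo.preimage (continuous_mul_left x⁻¹)
  have hcm : ∀ x, MeasurableSet (coset x) := fun x => (hco x).measurableSet
  have hcν : ∀ x, ν (coset x) = ν L := fun x => measure_preimage_mul ν x⁻¹ _
  have hSsat' : ∀ h l : H, l ∈ L → (h * l ∈ S ↔ h ∈ S) := by
    intro h l hl
    constructor
    · intro hh; have := hSsat _ hh l⁻¹ (L.inv_mem hl); simpa [mul_assoc] using this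
    · intro hh; exact hSsat _ hh _ hl
  have hrep : ∀ h : H, ∃ d ∈ E, mkL (τ d) = mkL h := by
    intro h
    obtain ⟨g, hg⟩ := hdense.exists_mem_open (hco h) ⟨h, by simp [hmem, L.one_mem]⟩
    obtain ⟨d, ⟨hdE, hdΛ⟩, -⟩ := hE g
    refine ⟨d, hdE, ?_⟩
    have h1 : (τ g)⁻¹ * τ d ∈ L := by
      have := hle _ hdΛ; simpa [map_mul] using this
    have e1 : mkL (τ g) = mkL (τ d) := QuotientGroup.eq.mpr h1
    have e2 : mkL h = mkL (τ g) := QuotientGroup.eq.mpr hg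
    rw [← e1, ← e2]
  have hout : ∀ q : H ⧸ L, mkL (Quotient.out q) = q := fun q => QuotientGroup.out_eq' q
  have hkey : ∀ (q : H ⧸ L) (h : H), mkL h = q ↔ (Quotient.out q)⁻¹ * h ∈ L := by
    intro q h
    have base : mkL (Quotient.out q) = mkL h ↔ (Quotient.out q)⁻¹ * h ∈ L :=
      QuotientGroup.eq (s := L) (a := Quotient.out q) (b := h)
    constructor
    · intro hh; exact base.mp ((hout q).trans hh.symm)
    · intro hh; exact ((base.mpr hh).symm).trans (hout q)
  have houtS : ∀ h : H, (Quotient.out (mkL h) ∈ S ↔ h ∈ S) := by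
    intro h
    have h1 : h⁻¹ * Quotient.out (mkL h) ∈ L := by
      have := (hkey (mkL h) h).mp rfl
      have e : ((Quotient.out (mkL h))⁻¹ * h)⁻¹ = h⁻¹ * Quotient.out (mkL h) := by group
      rw [← e]; exact L.inv_mem this
    have e : h * (h⁻¹ * Quotient.out (mkL h)) = Quotient.out (mkL h) := by group
    rw [← e]; exact hSsat' h _ h1
  have hQmem : ∀ h : H, mkL h ∈ Q := by
    intro h; obtain ⟨d, hdE, hd⟩ := hrep h
    exact Finset.mem_image.mpr ⟨d, hdE, hd⟩
  have hcover : ∀ h : H, h ∈ coset (Quotient.out (mkL h)) := fun h => (hkey (mkL h) h).mp rfl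
  have hdisj : (↑Q : Set (H ⧸ L)).PairwiseDisjoint (fun q => coset (Quotient.out q)) := by
    rintro q₁ - q₂ - hne
    refine Set.disjoint_left.mpr ?_
    intro h h1 h2
    exact hne (by rw [← (hkey q₁ h).mpr h1, ← (hkey q₂ h).mpr h2])
  have huniv : (Set.univ : Set H) = ⋃ q ∈ Q, coset (Quotient.out q) := by
    ext h
    simp only [Set.mem_univ, true_iff, Set.mem_iUnion]
    exact ⟨mkL h, hQmem h, hcover h⟩
  have hν1 : (Q.card : ℝ≥0∞) * ν L = 1 := by
    have h1 := measure_biUnion_finset (μ := ν) hdisj (fun q _ => hcm _)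
    rw [← huniv, measure_univ] at h1
    rw [Finset.sum_congr rfl (fun q _ => hcν _), Finset.sum_const, nsmul_eq_mul] at h1
    exact h1.symm
  set Qf : Finset (H ⧸ L) := Q.filter (fun q => Quotient.out q ∈ S) with hQf
  have hSun : S = ⋃ q ∈ Qf, coset (Quotient.out q) := by
    ext h
    simp only [Set.mem_iUnion, hQf, Finset.mem_filter]
    constructor
    · intro hh
      exact ⟨mkL h, ⟨hQmem h, (houtS h).mpr hh⟩, hcover h⟩
    · rintro ⟨q, ⟨hqQ, hqS⟩, hq⟩
      have h2 : Quotient.out q * ((Quotient.out q)⁻¹ * h) ∈ S := hSsat _ hqS _ hq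
      simpa using h2
  have hνS : ν S = (Qf.card : ℝ≥0∞) * ν L := by
    rw [hSun, measure_biUnion_finset (μ := ν) (hdisj.subset (Finset.coe_subset.mpr (Finset.filter_subset _ _))) (fun q _ => hcm _),
      Finset.sum_congr rfl (fun q _ => hcν _), Finset.sum_const, nsmul_eq_mul]
  set M : Subgroup G := L.comap τ with hM
  set t := (E.filter fun d => d ∈ M).card with ht
  have hfiber : ∀ q ∈ Q, (E.filter fun d => mkL (τ d) = q).card = t := by
    intro q hq
    obtain ⟨g, hg⟩ := hdense.exists_mem_open (hco (Quotient.out q))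
      ⟨Quotient.out q, by simp [hmem, L.one_mem]⟩
    have hiff : ∀ h : H, ((Quotient.out q)⁻¹ * h ∈ L ↔ (τ g)⁻¹ * h ∈ L) := by
      intro h
      constructor
      · intro hh
        have h2 := L.mul_mem (L.inv_mem hg) hh
        have e : ((Quotient.out q)⁻¹ * τ g)⁻¹ * ((Quotient.out q)⁻¹ * h) = (τ g)⁻¹ * h := by
          group
        rwa [e] at h2
      · intro hh
        have h2 := L.mul_mem hg hh
        have e : ((Quotient.out q)⁻¹ * τ g) * ((τ g)⁻¹ * h) = (Quotient.out q)⁻¹ * h := by group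
        rwa [e] at h2
    have hcongr : (E.filter fun d => mkL (τ d) = q) = (E.filter fun d => g⁻¹ * d ∈ M) := by
      apply Finset.filter_congr
      rintro d -
      rw [hkey q (τ d), hiff (τ d), hM]
      simp [Subgroup.mem_comap, map_mul]
    rw [hcongr, ht]
    exact fiber_const (fun γ hγ => Subgroup.mem_comap.mpr (hle γ hγ)) hE g
  have hcardE : (E.card : ℝ≥0∞) = (Q.card : ℝ≥0∞) * t := by
    have h1 : E.card = ∑ q ∈ Q, (E.filter fun d => mkL (τ d) = q).card :=
      Finset.card_eq_sum_card_fiberwise (fun d _ => hQmem (τ d))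
    rw [h1, Finset.sum_congr rfl hfiber, Finset.sum_const, smul_eq_mul]
    push_cast
    ring
  have hcardS : ((E.filter fun d => τ d ∈ S).card : ℝ≥0∞) = (Qf.card : ℝ≥0∞) * t := by
    have h1 : (E.filter fun d => τ d ∈ S).card
        = ∑ q ∈ Qf, ((E.filter fun d => τ d ∈ S).filter fun d => mkL (τ d) = q).card := by
      apply Finset.card_eq_sum_card_fiberwise
      intro d hd
      obtain ⟨hdE, hdS⟩ := Finset.mem_filter.mp hd
      exact Finset.mem_filter.mpr ⟨hQmem _, (houtS (τ d)).mpr hdS⟩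
    have h2 : ∀ q ∈ Qf, ((E.filter fun d => τ d ∈ S).filter fun d => mkL (τ d) = q).card = t := by
      intro q hq
      obtain ⟨hqQ, hqS⟩ := Finset.mem_filter.mp hq
      rw [Finset.filter_filter]
      have h3 : (E.filter fun d => τ d ∈ S ∧ mkL (τ d) = q) = E.filter fun d => mkL (τ d) = q := by
        apply Finset.filter_congr
        rintro d -
        constructor
        · rintro ⟨-, h⟩; exact h
        · intro h
          refine ⟨?_, h⟩
          have := (houtS (τ d)).mp (by rw [h]; exact hqS)
          exact this
      rw [h3]
      exact hfiber q hqQ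
    rw [h1, Finset.sum_congr rfl h2, Finset.sum_const, smul_eq_mul]
    push_cast
    ring
  rw [hcardS, hνS, hcardE]
  calc (Qf.card : ℝ≥0∞) * t = (Qf.card : ℝ≥0∞) * t * 1 := by rw [mul_one]
    _ = (Qf.card : ℝ≥0∞) * t * ((Q.card : ℝ≥0∞) * ν L) := by rw [hν1]
    _ = (Qf.card : ℝ≥0∞) * ν L * ((Q.card : ℝ≥0∞) * t) := by ring

section PerIff
variable {G H : Type*} [Group G] [Group H] [TopologicalSpace H] [IsTopologicalGroup H]

lemma perA_true_iff (τ : G →* H) {W : Set H} (hWp : W = closure (interior W))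
    (L : Subgroup H) (Λ₀ : Subgroup G) (hsub : ∀ γ ∈ Λ₀, τ γ ∈ L)
    (hdenseL : (L : Set H) ⊆ closure (⇑τ '' (Λ₀ : Set G))) (g : G) :
    g ∈ perA (modelSet (⇑τ) W) Λ₀ true ↔ ∀ l ∈ L, τ g * l ∈ W := by
  have hWclosed : IsClosed W := by rw [hWp]; exact isClosed_closure
  constructor
  · intro hg l hl
    rw [← hWclosed.closure_eq, mem_closure_iff]
    intro O hO hmemO
    have hV : IsOpen ((fun h => τ g * h) ⁻¹' O) := hO.preimage (continuous_mul_left _)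
    have hlc := hdenseL hl
    rw [mem_closure_iff] at hlc
    obtain ⟨y, hyV, γ, hγ, rfl⟩ := hlc _ hV hmemO
    refine ⟨τ g * τ γ, hyV, ?_⟩
    have := hg γ hγ
    simpa [modelSet, map_mul] using this
  · intro hg γ hγ
    have : τ (g * γ) ∈ W := by rw [map_mul]; exact hg _ (hsub γ hγ)
    simpa [modelSet] using this

lemma perA_false_iff (τ : G →* H) {W : Set H} (hWp : W = closure (interior W))
    (L : Subgroup H) (hLo : IsOpen (L : Set H)) (Λ₀ : Subgroup G)
    (hsub : ∀ γ ∈ Λ₀, τ γ ∈ L)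
    (hdenseL : (L : Set H) ⊆ closure (⇑τ '' (Λ₀ : Set G))) (g : G) :
    g ∈ perA (modelSet (⇑τ) W) Λ₀ false ↔ ∀ l ∈ L, τ g * l ∉ W := by
  constructor
  · intro hg l hl hW
    rw [hWp, mem_closure_iff] at hW
    obtain ⟨y, hyO, hyW⟩ := hW ((fun h => (τ g)⁻¹ * h) ⁻¹' (L : Set H))
      (hLo.preimage (continuous_mul_left _)) (by simpa using hl)
    have hl' : (τ g)⁻¹ * y ∈ (L : Set H) := hyO
    have hlc := hdenseL hl'
    rw [mem_closure_iff] at hlc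
    have hV : IsOpen ((fun h => τ g * h) ⁻¹' interior W) :=
      isOpen_interior.preimage (continuous_mul_left _)
    have hmemV : (τ g)⁻¹ * y ∈ (fun h => τ g * h) ⁻¹' interior W := by
      simpa [mul_inv_cancel_left] using hyW
    obtain ⟨z, hzV, γ, hγ, rfl⟩ := hlc _ hV hmemV
    have hzW : τ g * τ γ ∈ W := by
      rw [hWp]; exact subset_closure hzV
    have := hg γ hγ
    rw [show (modelSet (⇑τ) W (g * γ) = false) ↔ ¬ (τ (g * γ) ∈ W) by
      simp [modelSet]] at this
    exact this (by rwa [map_mul])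
  · intro hg γ hγ
    have : ¬ (τ (g * γ) ∈ W) := by rw [map_mul]; exact hg _ (hsub γ hγ)
    simpa [modelSet] using this

lemma perSet_iff (τ : G →* H) {W : Set H} (hWp : W = closure (interior W))
    (L : Subgroup H) (hLo : IsOpen (L : Set H)) (Λ₀ : Subgroup G)
    (hsub : ∀ γ ∈ Λ₀, τ γ ∈ L)
    (hdenseL : (L : Set H) ⊆ closure (⇑τ '' (Λ₀ : Set G))) (g : G) :
    g ∈ perSet (modelSet (⇑τ) W) Λ₀
      ↔ ((∀ l ∈ L, τ g * l ∈ W) ∨ (∀ l ∈ L, τ g * l ∉ W)) := by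
  unfold perSet
  rw [Set.mem_union, perA_true_iff τ hWp L Λ₀ hsub hdenseL g,
    perA_false_iff τ hWp L hLo Λ₀ hsub hdenseL g, or_comm]

lemma isOpen_saturated (L : Subgroup H) (hLo : IsOpen (L : Set H)) (S : Set H)
    (hsat : ∀ h ∈ S, ∀ l ∈ L, h * l ∈ S) : IsOpen S := by
  rw [isOpen_iff_forall_mem_open]
  intro h hh
  refine ⟨(fun y => h⁻¹ * y) ⁻¹' (L : Set H), ?_,
    hLo.preimage (continuous_mul_left _), by simpa using L.one_mem⟩
  intro y hy
  have := hsat h hh _ hy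
  simpa using this

lemma subgroup_isOpen_of_cover (L : Subgroup H) (hclosed : IsClosed (L : Set H))
    (C : Finset H) (hcover : ∀ h : H, ∃ c ∈ C, c⁻¹ * h ∈ L) : IsOpen (L : Set H) := by
  classical
  rw [← isClosed_compl_iff]
  have hset : (↑L : Set H)ᶜ
      = ⋃ c ∈ C.filter (fun c => c ∉ L), (fun h => c⁻¹ * h) ⁻¹' (L : Set H) := by
    ext h
    constructor
    · intro hh
      obtain ⟨c, hcC, hcL⟩ := hcover h
      have hcnot : c ∉ L := by
        intro hc
        exact hh (by simpa [mul_assoc] using L.mul_mem hc hcL)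
      exact Set.mem_biUnion (Finset.mem_filter.mpr ⟨hcC, hcnot⟩) hcL
    · intro hh
      simp only [Set.mem_iUnion, Finset.mem_filter] at hh
      obtain ⟨c, ⟨hcC, hcnot⟩, hc⟩ := hh
      intro hhL
      apply hcnot
      have : (c⁻¹ * h) * h⁻¹ ∈ L := L.mul_mem hc (L.inv_mem hhL)
      have e : ((c⁻¹ * h) * h⁻¹)⁻¹ = c := by group
      rw [← e]; exact L.inv_mem this
  rw [hset]
  apply Set.Finite.isClosed_biUnion (Finset.finite_toSet _)
  intro c _
  exact hclosed.preimage (continuous_mul_left _)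

end PerIff

open Classical in
lemma density_indep {G : Type*} [Group G] {Λ₀ Λ : Subgroup G} (hle : Λ₀ ≤ Λ)
    {E E₀ : Finset G} (hE : IsFundDom Λ E) (hE₀ : IsFundDom Λ₀ E₀) (x : G → Bool) :
    (E₀.filter fun d => d ∈ perSet x Λ).card * E.card
      = (E.filter fun d => d ∈ perSet x Λ).card * E₀.card := by
  classical
  set ψ : G → G := fun d => (hE d).choose with hψ
  have hψE : ∀ d, ψ d ∈ E := fun d => (hE d).choose_spec.1.1
  have hψΛ : ∀ d, d⁻¹ * ψ d ∈ Λ := fun d => (hE d).choose_spec.1.2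
  have hψeq : ∀ d e, e ∈ E → d⁻¹ * e ∈ Λ → ψ d = e :=
    fun d e he hΛ => ((hE d).choose_spec.2 e ⟨he, hΛ⟩).symm
  set s := (E₀.filter fun d => d ∈ Λ).card with hs
  have hfib : ∀ e ∈ E, (E₀.filter fun d => ψ d = e).card = s := by
    intro e he
    have hcongr : (E₀.filter fun d => ψ d = e) = E₀.filter fun d => e⁻¹ * d ∈ Λ := by
      apply Finset.filter_congr
      rintro d -
      constructor
      · intro h
        have h2 := hψΛ d; rw [h] at h2
        rw [show e⁻¹ * d = (d⁻¹ * e)⁻¹ by group]; exact Λ.inv_mem h2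
      · intro h
        exact hψeq d e he (by rw [show d⁻¹ * e = (e⁻¹ * d)⁻¹ by group]; exact Λ.inv_mem h)
    rw [hcongr, hs]; exact fiber_const hle hE₀ e
  have h1 : E₀.card = E.card * s := by
    rw [Finset.card_eq_sum_card_fiberwise (f := ψ) (t := E) (fun d _ => hψE d),
      Finset.sum_congr rfl hfib, Finset.sum_const, smul_eq_mul]
  have h2 : (E₀.filter fun d => d ∈ perSet x Λ).card
      = (E.filter fun d => d ∈ perSet x Λ).card * s := by
    rw [Finset.card_eq_sum_card_fiberwise (f := ψ)
      (t := E.filter fun d => d ∈ perSet x Λ) ?hmap]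
    case hmap =>
      intro d hd
      obtain ⟨hdE₀, hdP⟩ := Finset.mem_filter.mp hd
      exact Finset.mem_filter.mpr ⟨hψE d, perSet_invariant hdP (hψΛ d)⟩
    have hfib2 : ∀ e ∈ E.filter (fun d => d ∈ perSet x Λ),
        ((E₀.filter fun d => d ∈ perSet x Λ).filter fun d => ψ d = e).card = s := by
      intro e he
      obtain ⟨heE, heP⟩ := Finset.mem_filter.mp he
      rw [Finset.filter_filter]
      have hcongr : (E₀.filter fun d => d ∈ perSet x Λ ∧ ψ d = e)
          = E₀.filter fun d => ψ d = e := by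
        apply Finset.filter_congr
        rintro d -
        constructor
        · rintro ⟨-, h⟩; exact h
        · intro h
          refine ⟨?_, h⟩
          have hΛ : d⁻¹ * e ∈ Λ := by rw [← h]; exact hψΛ d
          exact perSet_invariant heP
            (by rw [show e⁻¹ * d = (d⁻¹ * e)⁻¹ by group]; exact Λ.inv_mem hΛ)
      rw [hcongr]; exact hfib e heE
    rw [Finset.sum_congr rfl hfib2, Finset.sum_const, smul_eq_mul]
  rw [h1, h2]; ring

open Classical in
lemma perDensity_eq {G : Type*} [Group G] (x : G → Bool) (Λ : Subgroup G) (E : Finset G) :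
    perDensity x Λ E = ((E.filter fun d => d ∈ perSet x Λ).card : ℝ) / (E.card : ℝ) := by
  have hset : ((E : Set G) ∩ perSet x Λ) = ↑(E.filter fun d => d ∈ perSet x Λ) := by
    ext d; simp [Finset.mem_coe, Finset.mem_filter]
  rw [perDensity, hset, Set.ncard_coe_finset]

open Classical in
lemma density_le_aux {G H : Type*} [Group G] [Group H] [TopologicalSpace H]
    [IsTopologicalGroup H] [MeasurableSpace H] [BorelSpace H]
    (ν : Measure H) [IsProbabilityMeasure ν] [ν.IsMulLeftInvariant]
    (τ : G →* H) (hdense : DenseRange ⇑τ)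
    (Γ₀ : Subgroup G) (hfi₀ : Γ₀.FiniteIndex)
    (W : Set H) (hWp : W = closure (interior W))
    (Λ : Subgroup G) (hΛ : Λ.FiniteIndex) (E : Finset G) (hE : IsFundDom Λ E) :
    perDensity (modelSet (⇑τ) W) Λ E ≤ 1 - (ν (frontier W)).toReal := by
  classical
  haveI := hΛ; haveI := hfi₀
  have hWclosed : IsClosed W := by rw [hWp]; exact isClosed_closure
  set x : G → Bool := modelSet (⇑τ) W with hx
  set Λ₀ : Subgroup G := Λ ⊓ Γ₀ with hΛ₀
  haveI : Λ₀.FiniteIndex := inferInstance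
  set L : Subgroup H := (Λ₀.map τ).topologicalClosure with hL
  have hLcoe : (L : Set H) = closure (⇑τ '' (Λ₀ : Set G)) := rfl
  have hsub : ∀ γ ∈ Λ₀, τ γ ∈ L :=
    fun γ hγ => (Subgroup.le_topologicalClosure _) (Subgroup.mem_map_of_mem τ hγ)
  have hLclosed : IsClosed (L : Set H) := by rw [hLcoe]; exact isClosed_closure
  obtain ⟨E₀, hE₀⟩ := exists_fundDom Λ₀
  set C : Finset H := E₀.image ⇑τ with hC
  have hcover : ∀ h : H, ∃ c ∈ C, c⁻¹ * h ∈ L := by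
    have hF : IsClosed (⋃ c ∈ C, (fun y => c⁻¹ * y) ⁻¹' (L : Set H)) :=
      Set.Finite.isClosed_biUnion C.finite_toSet
        (fun c _ => hLclosed.preimage (continuous_mul_left _))
    have hrange : Set.range ⇑τ ⊆ ⋃ c ∈ C, (fun y => c⁻¹ * y) ⁻¹' (L : Set H) := by
      rintro - ⟨g, rfl⟩
      obtain ⟨d, ⟨hdE, hdΛ⟩, -⟩ := hE₀ g
      refine Set.mem_biUnion (Finset.mem_image_of_mem ⇑τ hdE) ?_
      have h2 : τ ((g⁻¹ * d)⁻¹) ∈ L := hsub _ (Λ₀.inv_mem hdΛ)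
      have e : (g⁻¹ * d)⁻¹ = d⁻¹ * g := by group
      rw [e, map_mul, map_inv] at h2
      exact h2
    have hclos : closure (Set.range ⇑τ) ⊆ ⋃ c ∈ C, (fun y => c⁻¹ * y) ⁻¹' (L : Set H) :=
      closure_minimal hrange hF
    intro h
    have := hclos (hdense h)
    simpa using this
  have hLo : IsOpen (L : Set H) := subgroup_isOpen_of_cover L hLclosed C hcover
  set S' : Set H := {h : H | ∀ l ∈ L, h * l ∉ frontier W} with hS'
  have hsat : ∀ h ∈ S', ∀ l ∈ L, h * l ∈ S' := by
    intro h hh l hl l' hl'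
    have := hh (l * l') (L.mul_mem hl hl')
    rwa [mul_assoc]
  have hS'open : IsOpen S' := isOpen_saturated L hLo S' hsat
  have hpersub : ∀ g : G, g ∈ perSet x Λ → τ g ∈ S' := by
    intro g hg
    have hg₀ : g ∈ perSet x Λ₀ := by
      rcases hg with h | h
      · exact Or.inl (fun γ hγ => h γ ((inf_le_left : Λ ⊓ Γ₀ ≤ Λ) hγ))
      · exact Or.inr (fun γ hγ => h γ ((inf_le_left : Λ ⊓ Γ₀ ≤ Λ) hγ))
    rw [hx, perSet_iff τ hWp L hLo Λ₀ hsub (hLcoe ▸ Set.Subset.rfl) g] at hg₀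
    rcases hg₀ with h1 | h1
    · intro l hl
      have hsubW : (fun y => (τ g)⁻¹ * y) ⁻¹' (L : Set H) ⊆ W := by
        intro y hy
        have := h1 _ hy
        simpa [mul_inv_cancel_left] using this
      have hint : (fun y => (τ g)⁻¹ * y) ⁻¹' (L : Set H) ⊆ interior W :=
        interior_maximal hsubW (hLo.preimage (continuous_mul_left _))
      have hmem : τ g * l ∈ interior W := hint (by simpa using hl)
      intro hfr
      exact hfr.2 hmem
    · intro l hl hfr
      have hW : τ g * l ∈ W := by
        have := hfr.1
        rwa [hWclosed.closure_eq] at this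
      exact h1 l hl hW
  have hcount := count_eq ν τ hdense L hLo Λ₀ hsub hE₀ S' hS'open.measurableSet hsat
  have hindep := density_indep (inf_le_left : Λ₀ ≤ Λ) hE hE₀ x
  have hmono : (E₀.filter fun d => d ∈ perSet x Λ).card
      ≤ (E₀.filter fun d => τ d ∈ S').card := by
    apply Finset.card_le_card
    intro d hd
    obtain ⟨hdE, hdP⟩ := Finset.mem_filter.mp hd
    exact Finset.mem_filter.mpr ⟨hdE, hpersub d hdP⟩
  have hcountR : ((E₀.filter fun d => τ d ∈ S').card : ℝ)
      = (ν S').toReal * E₀.card := by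
    have := congrArg ENNReal.toReal hcount
    simpa [ENNReal.toReal_mul] using this
  have hνS'le : (ν S').toReal ≤ 1 - (ν (frontier W)).toReal := by
    have hsub2 : S' ⊆ (frontier W)ᶜ := by
      intro h hh
      have := hh 1 L.one_mem
      simpa using this
    have h2 : ν S' ≤ ν (frontier W)ᶜ := measure_mono hsub2
    have h3 : ν (frontier W)ᶜ = 1 - ν (frontier W) :=
      prob_compl_eq_one_sub isClosed_frontier.measurableSet
    have h4 : (ν (frontier W)ᶜ).toReal = 1 - (ν (frontier W)).toReal := by
      rw [h3, ENNReal.toReal_sub_of_le prob_le_one ENNReal.one_ne_top, ENNReal.toReal_one]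
    calc (ν S').toReal ≤ (ν (frontier W)ᶜ).toReal :=
          ENNReal.toReal_mono (measure_ne_top ν _) h2
      _ = 1 - (ν (frontier W)).toReal := h4
  have hEpos : (0:ℝ) < E.card := by
    exact_mod_cast Finset.card_pos.mpr (isFundDom_nonempty hE)
  have hE₀pos : (0:ℝ) < E₀.card := by
    exact_mod_cast Finset.card_pos.mpr (isFundDom_nonempty hE₀)
  rw [perDensity_eq, div_le_iff₀ hEpos]
  have hchain : ((E.filter fun d => d ∈ perSet x Λ).card : ℝ) * E₀.card
      ≤ ((1 - (ν (frontier W)).toReal) * E.card) * E₀.card := by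
    have e1 : ((E.filter fun d => d ∈ perSet x Λ).card : ℝ) * E₀.card
        = ((E₀.filter fun d => d ∈ perSet x Λ).card : ℝ) * E.card := by
      exact_mod_cast congrArg (Nat.cast (R := ℝ)) hindep.symm
    rw [e1]
    calc ((E₀.filter fun d => d ∈ perSet x Λ).card : ℝ) * E.card
        ≤ ((E₀.filter fun d => τ d ∈ S').card : ℝ) * E.card := by
          apply mul_le_mul_of_nonneg_right _ hEpos.le
          exact_mod_cast hmono
      _ = (ν S').toReal * E₀.card * E.card := by rw [hcountR]
      _ ≤ (1 - (ν (frontier W)).toReal) * E₀.card * E.card := by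
          apply mul_le_mul_of_nonneg_right _ hEpos.le
          exact mul_le_mul_of_nonneg_right hνS'le hE₀pos.le
      _ = ((1 - (ν (frontier W)).toReal) * E.card) * E₀.card := by ring
  exact le_of_mul_le_mul_right hchain hE₀pos


/-- For a proper generic window `W` relative to a sequence `(Γ_n)` whose closures
`K_n = closure(τ(Γ_n))` are open subgroups forming a neighborhood basis of `1_H` with
`τ⁻¹(K_n) = Γ_n`, the periodic densities of `x_W` converge to `1 - ν(∂W)`, and the regularity
constant of `x_W` equals `1 - ν(∂W)`. -/
theorem stmt_5 {G : Type*} [Group G] [Countable G] [Infinite G]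
    {H : Type*} [Group H] [TopologicalSpace H] [IsTopologicalGroup H]
    [CompactSpace H] [TopologicalSpace.MetrizableSpace H] [MeasurableSpace H] [BorelSpace H]
    (ν : Measure H) [ν.IsHaarMeasure] [IsProbabilityMeasure ν]
    (τ : G →* H) (hinj : Function.Injective ⇑τ) (hdense : DenseRange ⇑τ)
    (Γ : ℕ → Subgroup G) (hdec : ∀ n, Γ (n + 1) ≤ Γ n)
    (hnorm : ∀ n, (Γ n).Normal) (hfi : ∀ n, (Γ n).FiniteIndex)
    (hopen : ∀ n, IsOpen (closure (⇑τ '' (Γ n : Set G))))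
    (hpre : ∀ n, (⇑τ) ⁻¹' closure (⇑τ '' (Γ n : Set G)) = (Γ n : Set G))
    (hbasis : ∀ U ∈ nhds (1 : H), ∃ n, closure (⇑τ '' (Γ n : Set G)) ⊆ U)
    (W : Set H) (hWc : IsCompact W) (hWp : W = closure (interior W))
    (hgen : frontier W ∩ Set.range ⇑τ = ∅)
    (D : ℕ → Finset G) (hD : ∀ n, IsFundDom (Γ n) (D n)) :
    Filter.Tendsto (fun n => perDensity (modelSet (⇑τ) W) (Γ n) (D n)) Filter.atTop
        (nhds (1 - (ν (frontier W)).toReal)) ∧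
      regConst (modelSet (⇑τ) W) = 1 - (ν (frontier W)).toReal ∧
      (regConst (modelSet (⇑τ) W) = 1 ↔ ν (frontier W) = 0) := by
  classical
  set x : G → Bool := modelSet (⇑τ) W with hx
  have hWclosed : IsClosed W := by rw [hWp]; exact isClosed_closure
  set K : ℕ → Subgroup H := fun n => ((Γ n).map τ).topologicalClosure with hK
  have hKcoe : ∀ n, (K n : Set H) = closure (⇑τ '' (Γ n : Set G)) := fun n => rfl
  have hKo : ∀ n, IsOpen (K n : Set H) := fun n => by rw [hKcoe]; exact hopen n
  have hKsub : ∀ n, ∀ γ ∈ Γ n, τ γ ∈ K n :=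
    fun n γ hγ => (Subgroup.le_topologicalClosure _) (Subgroup.mem_map_of_mem τ hγ)
  have hKmono : ∀ n, (K (n + 1) : Set H) ⊆ (K n : Set H) := fun n => by
    rw [hKcoe, hKcoe]; exact closure_mono (Set.image_mono (hdec n))
  set S : ℕ → Set H := fun n => {h | (∀ l ∈ K n, h * l ∈ W) ∨ (∀ l ∈ K n, h * l ∉ W)}
    with hS
  set B : ℕ → Set H := fun n => (S n)ᶜ with hB
  have hsat : ∀ n, ∀ h ∈ S n, ∀ l ∈ K n, h * l ∈ S n := by
    intro n h hh l hl
    rcases hh with h1 | h1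
    · exact Or.inl (fun l' hl' => by rw [mul_assoc]; exact h1 _ ((K n).mul_mem hl hl'))
    · exact Or.inr (fun l' hl' => by rw [mul_assoc]; exact h1 _ ((K n).mul_mem hl hl'))
  have hSopen : ∀ n, IsOpen (S n) := fun n => isOpen_saturated (K n) (hKo n) (S n) (hsat n)
  have hper : ∀ n (g : G), g ∈ perSet x (Γ n) ↔ τ g ∈ S n := by
    intro n g
    rw [hx, perSet_iff τ hWp (K n) (hKo n) (Γ n) (hKsub n) ((hKcoe n) ▸ Set.Subset.rfl) g]
    exact Iff.rfl
  have hDpos : ∀ n, (0:ℝ) < (D n).card := fun n => by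
    exact_mod_cast Finset.card_pos.mpr (isFundDom_nonempty (hD n))
  have hdens : ∀ n, perDensity x (Γ n) (D n) = (ν (S n)).toReal := by
    intro n
    have hcount := count_eq ν τ hdense (K n) (hKo n) (Γ n) (hKsub n) (hD n) (S n)
      (hSopen n).measurableSet (hsat n)
    have hcountR : (((D n).filter fun d => τ d ∈ S n).card : ℝ)
        = (ν (S n)).toReal * (D n).card := by
      have := congrArg ENNReal.toReal hcount
      rw [Finset.filter_congr_decidable] at this
      simpa [ENNReal.toReal_mul] using this
    have hfeq : ((D n).filter fun d => d ∈ perSet x (Γ n))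
        = ((D n).filter fun d => τ d ∈ S n) :=
      Finset.filter_congr (fun d _ => hper n d)
    rw [perDensity_eq, hfeq, hcountR, mul_div_assoc, div_self (hDpos n).ne', mul_one]
  have hSmono : ∀ n, S n ⊆ S (n + 1) := by
    intro n h hh
    rcases hh with h1 | h1
    · exact Or.inl (fun l hl => h1 l (hKmono n hl))
    · exact Or.inr (fun l hl => h1 l (hKmono n hl))
  have hBanti : Antitone B :=
    antitone_nat_of_succ_le (fun n => compl_subset_compl.mpr (hSmono n))
  have hBm : ∀ n, MeasurableSet (B n) := fun n => (hSopen n).measurableSet.compl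
  have hBint : (⋂ n, B n) = frontier W := by
    ext h
    simp only [Set.mem_iInter, hB, Set.mem_compl_iff, hS, Set.mem_setOf_eq, not_or]
    constructor
    · intro hh
      rw [frontier_eq_closure_inter_closure]
      constructor
      · rw [mem_closure_iff]
        intro O hO hhO
        have hV : (fun y => h * y) ⁻¹' O ∈ nhds (1 : H) := by
          apply IsOpen.mem_nhds (hO.preimage (continuous_mul_left _))
          simpa using hhO
        obtain ⟨n, hn⟩ := hbasis _ hV
        have h2 := (hh n).2
        push_neg at h2
        obtain ⟨l, hl, hlW⟩ := h2
        exact ⟨h * l, hn (by rw [← hKcoe n]; exact hl), hlW⟩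
      · rw [mem_closure_iff]
        intro O hO hhO
        have hV : (fun y => h * y) ⁻¹' O ∈ nhds (1 : H) := by
          apply IsOpen.mem_nhds (hO.preimage (continuous_mul_left _))
          simpa using hhO
        obtain ⟨n, hn⟩ := hbasis _ hV
        have h2 := (hh n).1
        push_neg at h2
        obtain ⟨l, hl, hlW⟩ := h2
        exact ⟨h * l, hn (by rw [← hKcoe n]; exact hl), hlW⟩
    · intro hfr n
      rw [frontier_eq_closure_inter_closure] at hfr
      constructor
      · intro hall
        have h1 := hfr.2
        rw [mem_closure_iff] at h1
        obtain ⟨y, hyO, hyW⟩ := h1 ((fun y => h⁻¹ * y) ⁻¹' (K n : Set H))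
          ((hKo n).preimage (continuous_mul_left _)) (by simpa using (K n).one_mem)
        apply hyW
        have := hall _ hyO
        simpa using this
      · intro hall
        have h1 := hfr.1
        rw [mem_closure_iff] at h1
        obtain ⟨y, hyO, hyW⟩ := h1 ((fun y => h⁻¹ * y) ⁻¹' (K n : Set H))
          ((hKo n).preimage (continuous_mul_left _)) (by simpa using (K n).one_mem)
        apply hall _ hyO
        simpa using hyW
  have hmeas : Filter.Tendsto (fun n => ν (B n)) Filter.atTop (nhds (ν (frontier W))) := by
    have h1 := MeasureTheory.tendsto_measure_iInter_atTop
      (fun n => (hBm n).nullMeasurableSet) hBanti ⟨0, measure_ne_top ν _⟩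
    rw [hBint] at h1
    exact h1
  have htoReal : Filter.Tendsto (fun n => (ν (B n)).toReal) Filter.atTop
      (nhds (ν (frontier W)).toReal) :=
    (ENNReal.tendsto_toReal (measure_ne_top ν _)).comp hmeas
  have hνSB : ∀ n, (ν (S n)).toReal = 1 - (ν (B n)).toReal := by
    intro n
    have h2 : ν (S n) = 1 - ν (B n) := by
      rw [show S n = (B n)ᶜ by rw [hB]; simp, prob_compl_eq_one_sub (hBm n)]
    rw [h2, ENNReal.toReal_sub_of_le prob_le_one ENNReal.one_ne_top, ENNReal.toReal_one]
  have hTend : Filter.Tendsto (fun n => perDensity x (Γ n) (D n)) Filter.atTop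
      (nhds (1 - (ν (frontier W)).toReal)) := by
    have h2 : Filter.Tendsto (fun n => 1 - (ν (B n)).toReal) Filter.atTop
        (nhds (1 - (ν (frontier W)).toReal)) := htoReal.const_sub 1
    exact h2.congr (fun n => by rw [hdens n, hνSB n])
  refine ⟨hTend, ?_⟩
  set A : Set ℝ := {r : ℝ | ∃ (Λ : Subgroup G) (E : Finset G),
    Λ.FiniteIndex ∧ IsFundDom Λ E ∧ r = perDensity x Λ E} with hA
  have hub : ∀ r ∈ A, r ≤ 1 - (ν (frontier W)).toReal := by
    rintro r ⟨Λ, E, hΛfi, hEf, rfl⟩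
    exact density_le_aux ν τ hdense (Γ 0) (hfi 0) W hWp Λ hΛfi E hEf
  have hne : A.Nonempty := ⟨perDensity x (Γ 0) (D 0), Γ 0, D 0, hfi 0, hD 0, rfl⟩
  have hbdd : BddAbove A := ⟨_, hub⟩
  have hreg : regConst x = 1 - (ν (frontier W)).toReal := by
    have hrc : regConst x = sSup A := rfl
    rw [hrc]
    apply le_antisymm
    · exact csSup_le hne hub
    · refine le_of_tendsto hTend (Filter.Eventually.of_forall fun n => ?_)
      exact le_csSup hbdd ⟨Γ n, D n, hfi n, hD n, rfl⟩
  refine ⟨hreg, ?_⟩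
  rw [hreg]
  constructor
  · intro h
    have ht : (ν (frontier W)).toReal = 0 := by linarith
    rcases (ENNReal.toReal_eq_zero_iff _).mp ht with h0 | h0
    · exact h0
    · exact absurd h0 (measure_ne_top ν _)
  · intro h; rw [h]; simp
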